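/- Suppose λ₁ = λ₂ = λ, α₁ = α₂ = α and β₁ = β₂ = β (symmetric case). Write V_n = ζ₁(n) − ζ₂(n) and Σ_n = ζ₁(n) + ζ₂(n). Then for every n ≥ 0, almost surely on the event {ζ₁(n) ≥ 1 and ζ₂(n) ≥ 1}: E[V_{n+1}² | 𝓕_n] = V_n²·(1 + 2(α + β)/(2λ + (α + β)Σ_n)) + 1. -/

import Mathlib

open MeasureTheory Filter

lemma aux_sq_bound (u v U V : ℕ) (hu : u ≤ U) (hv : v ≤ V) (t : ℝ) (ht : |t| ≤ 1) :
    ‖((u : ℝ) - (v : ℝ) + t) ^ 2‖ ≤ ((U + V + 1 : ℕ) : ℝ) ^ 2 := by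
  rw [Real.norm_eq_abs, abs_of_nonneg (sq_nonneg _)]
  obtain ⟨h1, h2⟩ := abs_le.mp ht
  have hu' : (u : ℝ) ≤ U := Nat.cast_le.mpr hu
  have hv' : (v : ℝ) ≤ V := Nat.cast_le.mpr hv
  have h3 : (0:ℝ) ≤ u := Nat.cast_nonneg u
  have h4 : (0:ℝ) ≤ v := Nat.cast_nonneg v
  apply sq_le_sq' <;> push_cast <;> linarith

set_option maxHeartbeats 1000000 in
/-- Conditional second moment of the difference in the symmetric case.
For the discrete-time competition process with linear interaction with `λ₁ = λ₂ = λ`,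
`α₁ = α₂ = α`, `β₁ = β₂ = β`, writing `Vₙ = ζ₁(n) − ζ₂(n)` and `Σₙ = ζ₁(n) + ζ₂(n)`,
for every `n`, almost surely on `{ζ₁(n) ≥ 1 and ζ₂(n) ≥ 1}`:
`E[V_{n+1}² | ℱ n] = Vₙ²·(1 + 2(α+β)/(2λ + (α+β)Σₙ)) + 1`. -/
theorem stmt_14
    {Ω : Type*} {m0 : MeasurableSpace Ω} (P : Measure Ω) [IsProbabilityMeasure P]
    (ℱ : Filtration ℕ m0)
    (l₁ l₂ β₁ β₂ α₁ α₂ : ℝ)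
    (hl₁ : 0 < l₁) (hl₂ : 0 < l₂) (hβ₁ : 0 < β₁) (hβ₂ : 0 < β₂)
    (hα₁ : 0 ≤ α₁) (hα₂ : 0 ≤ α₂)
    (ζ₁ ζ₂ : ℕ → Ω → ℕ)
    (hζ₁meas : ∀ n, Measurable[ℱ n] (ζ₁ n)) (hζ₂meas : ∀ n, Measurable[ℱ n] (ζ₂ n))
    (x₀ y₀ : ℕ) (hinit : ∀ ω, ζ₁ 0 ω = x₀ ∧ ζ₂ 0 ω = y₀)
    (hstep : ∀ n, ∀ᵐ ω ∂P,
      (ζ₁ (n + 1) ω = ζ₁ n ω + 1 ∧ ζ₂ (n + 1) ω = ζ₂ n ω) ∨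
      (ζ₁ (n + 1) ω = ζ₁ n ω ∧ ζ₂ (n + 1) ω = ζ₂ n ω + 1) ∨
      (ζ₁ (n + 1) ω + 1 = ζ₁ n ω ∧ ζ₂ (n + 1) ω = ζ₂ n ω) ∨
      (ζ₁ (n + 1) ω = ζ₁ n ω ∧ ζ₂ (n + 1) ω + 1 = ζ₂ n ω))
    (W : ℕ → Ω → ℝ)
    (hW : ∀ n ω, W n ω =
      (l₁ + α₁ * (ζ₁ n ω : ℝ)) + (l₂ + α₂ * (ζ₂ n ω : ℝ)) +
      (if 1 ≤ ζ₁ n ω then β₁ * (ζ₂ n ω : ℝ) else 0) +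
      (if 1 ≤ ζ₂ n ω then β₂ * (ζ₁ n ω : ℝ) else 0))
    (hright : ∀ n,
      P[({ω' | ζ₁ (n + 1) ω' = ζ₁ n ω' + 1 ∧ ζ₂ (n + 1) ω' = ζ₂ n ω'} : Set Ω).indicator
          (fun _ => (1 : ℝ)) | ℱ n]
        =ᵐ[P] fun ω => (l₁ + α₁ * (ζ₁ n ω : ℝ)) / W n ω)
    (hupp : ∀ n,
      P[({ω' | ζ₁ (n + 1) ω' = ζ₁ n ω' ∧ ζ₂ (n + 1) ω' = ζ₂ n ω' + 1} : Set Ω).indicator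
          (fun _ => (1 : ℝ)) | ℱ n]
        =ᵐ[P] fun ω => (l₂ + α₂ * (ζ₂ n ω : ℝ)) / W n ω)
    (hleft : ∀ n,
      P[({ω' | ζ₁ (n + 1) ω' + 1 = ζ₁ n ω' ∧ ζ₂ (n + 1) ω' = ζ₂ n ω'} : Set Ω).indicator
          (fun _ => (1 : ℝ)) | ℱ n]
        =ᵐ[P] fun ω => (if 1 ≤ ζ₁ n ω then β₁ * (ζ₂ n ω : ℝ) else 0) / W n ω)
    (hdownp : ∀ n,
      P[({ω' | ζ₁ (n + 1) ω' = ζ₁ n ω' ∧ ζ₂ (n + 1) ω' + 1 = ζ₂ n ω'} : Set Ω).indicator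
          (fun _ => (1 : ℝ)) | ℱ n]
        =ᵐ[P] fun ω => (if 1 ≤ ζ₂ n ω then β₂ * (ζ₁ n ω : ℝ) else 0) / W n ω)
    (lam a b : ℝ) (hsyml : l₁ = lam ∧ l₂ = lam) (hsyma : α₁ = a ∧ α₂ = a)
    (hsymb : β₁ = b ∧ β₂ = b) :
    ∀ n, ∀ᵐ ω ∂P, 1 ≤ ζ₁ n ω → 1 ≤ ζ₂ n ω →
      (P[(fun ω' => ((ζ₁ (n + 1) ω' : ℝ) - (ζ₂ (n + 1) ω' : ℝ)) ^ 2) | ℱ n]) ω =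
        ((ζ₁ n ω : ℝ) - (ζ₂ n ω : ℝ)) ^ 2 *
          (1 + 2 * (a + b) / (2 * lam + (a + b) * ((ζ₁ n ω : ℝ) + (ζ₂ n ω : ℝ)))) + 1 := by
  obtain ⟨rfl, rfl⟩ := hsyml
  obtain ⟨rfl, rfl⟩ := hsyma
  obtain ⟨rfl, rfl⟩ := hsymb
  -- after substitution the surviving names are l₂, α₂, β₂
  -- basic measurability
  have hm1 : ∀ m, Measurable (ζ₁ m) := fun m => (hζ₁meas m).mono (ℱ.le m) le_rfl
  have hm2 : ∀ m, Measurable (ζ₂ m) := fun m => (hζ₂meas m).mono (ℱ.le m) le_rfl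
  -- a.e. bound on the process
  have hbd : ∀ n, ∀ᵐ ω ∂P, ζ₁ n ω ≤ x₀ + n ∧ ζ₂ n ω ≤ y₀ + n := by
    intro n
    induction n with
    | zero =>
      filter_upwards with ω
      simp [(hinit ω).1, (hinit ω).2]
    | succ k ih =>
      filter_upwards [ih, hstep k] with ω h1 h2
      rcases h2 with ⟨e1, e2⟩ | ⟨e1, e2⟩ | ⟨e1, e2⟩ | ⟨e1, e2⟩ <;> omega
  intro n
  -- the four events
  set R : Set Ω := {ω' | ζ₁ (n + 1) ω' = ζ₁ n ω' + 1 ∧ ζ₂ (n + 1) ω' = ζ₂ n ω'} with hRdef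
  set U : Set Ω := {ω' | ζ₁ (n + 1) ω' = ζ₁ n ω' ∧ ζ₂ (n + 1) ω' = ζ₂ n ω' + 1} with hUdef
  set L : Set Ω := {ω' | ζ₁ (n + 1) ω' + 1 = ζ₁ n ω' ∧ ζ₂ (n + 1) ω' = ζ₂ n ω'} with hLdef
  set D : Set Ω := {ω' | ζ₁ (n + 1) ω' = ζ₁ n ω' ∧ ζ₂ (n + 1) ω' + 1 = ζ₂ n ω'} with hDdef
  have hRm : MeasurableSet R :=
    (measurableSet_eq_fun (hm1 (n+1)) ((hm1 n).add measurable_const)).inter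
      (measurableSet_eq_fun (hm2 (n+1)) (hm2 n))
  have hUm : MeasurableSet U :=
    (measurableSet_eq_fun (hm1 (n+1)) (hm1 n)).inter
      (measurableSet_eq_fun (hm2 (n+1)) ((hm2 n).add measurable_const))
  have hLm : MeasurableSet L :=
    (measurableSet_eq_fun ((hm1 (n+1)).add measurable_const) (hm1 n)).inter
      (measurableSet_eq_fun (hm2 (n+1)) (hm2 n))
  have hDm : MeasurableSet D :=
    (measurableSet_eq_fun (hm1 (n+1)) (hm1 n)).inter
      (measurableSet_eq_fun ((hm2 (n+1)).add measurable_const) (hm2 n))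
  -- the F_n-measurable coefficients
  set c1 : Ω → ℝ := fun ω => ((ζ₁ n ω : ℝ) - (ζ₂ n ω : ℝ) + 1) ^ 2 with hc1def
  set c2 : Ω → ℝ := fun ω => ((ζ₁ n ω : ℝ) - (ζ₂ n ω : ℝ) + (-1)) ^ 2 with hc2def
  have hcast1 : Measurable[ℱ n] (fun ω => (ζ₁ n ω : ℝ)) :=
    measurable_from_top.comp (hζ₁meas n)
  have hcast2 : Measurable[ℱ n] (fun ω => (ζ₂ n ω : ℝ)) :=
    measurable_from_top.comp (hζ₂meas n)
  have hc1m : StronglyMeasurable[ℱ n] c1 :=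
    (((hcast1.sub hcast2).add measurable_const).pow measurable_const).stronglyMeasurable
  have hc2m : StronglyMeasurable[ℱ n] c2 :=
    (((hcast1.sub hcast2).add measurable_const).pow measurable_const).stronglyMeasurable
  -- indicator functions
  set iR : Ω → ℝ := R.indicator (fun _ => (1:ℝ)) with hiRdef
  set iU : Ω → ℝ := U.indicator (fun _ => (1:ℝ)) with hiUdef
  set iL : Ω → ℝ := L.indicator (fun _ => (1:ℝ)) with hiLdef
  set iD : Ω → ℝ := D.indicator (fun _ => (1:ℝ)) with hiDdef
  -- integrability helper
  have hintb : ∀ (h : Ω → ℝ) (C : ℝ), AEStronglyMeasurable h P →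
      (∀ᵐ ω ∂P, ‖h ω‖ ≤ C) → Integrable h P := by
    intro h C hm hb
    exact (integrable_const C).mono' hm hb
  have hind_le_one : ∀ (S : Set Ω) (ω : Ω), ‖S.indicator (fun _ => (1:ℝ)) ω‖ ≤ 1 := by
    intro S ω
    by_cases h : ω ∈ S
    · rw [Set.indicator_of_mem h]; norm_num
    · rw [Set.indicator_of_notMem h]; norm_num
  -- integrability of indicators
  have hiRint : Integrable iR P := by
    refine hintb _ 1 ?_ (Filter.Eventually.of_forall (hind_le_one R))
    exact ((measurable_const.indicator hRm).aestronglyMeasurable)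
  have hiUint : Integrable iU P := by
    refine hintb _ 1 ?_ (Filter.Eventually.of_forall (hind_le_one U))
    exact ((measurable_const.indicator hUm).aestronglyMeasurable)
  have hiLint : Integrable iL P := by
    refine hintb _ 1 ?_ (Filter.Eventually.of_forall (hind_le_one L))
    exact ((measurable_const.indicator hLm).aestronglyMeasurable)
  have hiDint : Integrable iD P := by
    refine hintb _ 1 ?_ (Filter.Eventually.of_forall (hind_le_one D))
    exact ((measurable_const.indicator hDm).aestronglyMeasurable)
  -- bound constant
  set B : ℝ := ((x₀ + n + (y₀ + n) + 1 : ℕ) : ℝ) ^ 2 with hBdef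
  have hc1bd : ∀ᵐ ω ∂P, ‖c1 ω‖ ≤ B := by
    filter_upwards [hbd n] with ω hω
    exact aux_sq_bound _ _ _ _ hω.1 hω.2 1 (by norm_num)
  have hc2bd : ∀ᵐ ω ∂P, ‖c2 ω‖ ≤ B := by
    filter_upwards [hbd n] with ω hω
    exact aux_sq_bound _ _ _ _ hω.1 hω.2 (-1) (by norm_num)
  have hc1meas0 : AEStronglyMeasurable c1 P :=
    (hc1m.mono (ℱ.le n)).aestronglyMeasurable
  have hc2meas0 : AEStronglyMeasurable c2 P :=
    (hc2m.mono (ℱ.le n)).aestronglyMeasurable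
  -- integrability of products
  have hprod : ∀ (c i : Ω → ℝ) (S : Set Ω), AEStronglyMeasurable c P →
      (∀ᵐ ω ∂P, ‖c ω‖ ≤ B) → i = S.indicator (fun _ => (1:ℝ)) → MeasurableSet S →
      Integrable (c * i) P := by
    intro c i S hcm hcb hi hSm
    refine hintb _ B ?_ ?_
    · exact hcm.mul (by rw [hi]; exact (measurable_const.indicator hSm).aestronglyMeasurable)
    · filter_upwards [hcb] with ω hω
      rw [Pi.mul_apply, norm_mul]
      calc ‖c ω‖ * ‖i ω‖ ≤ B * 1 := by
            apply mul_le_mul hω (by rw [hi]; exact hind_le_one S ω) (norm_nonneg _)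
            exact le_trans (norm_nonneg _) hω
        _ = B := mul_one B
  have h1int : Integrable (c1 * iR) P := hprod c1 iR R hc1meas0 hc1bd hiRdef hRm
  have h2int : Integrable (c2 * iU) P := hprod c2 iU U hc2meas0 hc2bd hiUdef hUm
  have h3int : Integrable (c2 * iL) P := hprod c2 iL L hc2meas0 hc2bd hiLdef hLm
  have h4int : Integrable (c1 * iD) P := hprod c1 iD D hc1meas0 hc1bd hiDdef hDm
  -- f equals the sum a.e.
  set f : Ω → ℝ := fun ω' => ((ζ₁ (n + 1) ω' : ℝ) - (ζ₂ (n + 1) ω' : ℝ)) ^ 2 with hfdef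
  have hfg : f =ᵐ[P] c1 * iR + c2 * iU + c2 * iL + c1 * iD := by
    filter_upwards [hstep n] with ω hω
    have hval1 : ∀ (S : Set Ω), ω ∈ S → S.indicator (fun _ => (1:ℝ)) ω = 1 :=
      fun S h => Set.indicator_of_mem h _
    have hval0 : ∀ (S : Set Ω), ω ∉ S → S.indicator (fun _ => (1:ℝ)) ω = 0 :=
      fun S h => Set.indicator_of_notMem h _
    simp only [Pi.add_apply, Pi.mul_apply, hfdef, hiRdef, hiUdef, hiLdef, hiDdef,
      hc1def, hc2def]
    rcases hω with ⟨e1, e2⟩ | ⟨e1, e2⟩ | ⟨e1, e2⟩ | ⟨e1, e2⟩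
    · rw [hval1 R ⟨e1, e2⟩, hval0 U (by simp only [hUdef, Set.mem_setOf_eq]; omega),
        hval0 L (by simp only [hLdef, Set.mem_setOf_eq]; omega),
        hval0 D (by simp only [hDdef, Set.mem_setOf_eq]; omega), e1, e2]
      push_cast; ring
    · rw [hval0 R (by simp only [hRdef, Set.mem_setOf_eq]; omega), hval1 U ⟨e1, e2⟩,
        hval0 L (by simp only [hLdef, Set.mem_setOf_eq]; omega),
        hval0 D (by simp only [hDdef, Set.mem_setOf_eq]; omega), e1, e2]
      push_cast; ring
    · rw [hval0 R (by simp only [hRdef, Set.mem_setOf_eq]; omega),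
        hval0 U (by simp only [hUdef, Set.mem_setOf_eq]; omega), hval1 L ⟨e1, e2⟩,
        hval0 D (by simp only [hDdef, Set.mem_setOf_eq]; omega), ← e1, e2]
      push_cast; ring
    · rw [hval0 R (by simp only [hRdef, Set.mem_setOf_eq]; omega),
        hval0 U (by simp only [hUdef, Set.mem_setOf_eq]; omega),
        hval0 L (by simp only [hLdef, Set.mem_setOf_eq]; omega), hval1 D ⟨e1, e2⟩,
        e1, ← e2]
      push_cast; ring
  -- conditional expectation computation
  have key : P[f | ℱ n] =ᵐ[P]
      fun ω => c1 ω * ((l₂ + α₂ * (ζ₁ n ω : ℝ)) / W n ω)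
        + c2 ω * ((l₂ + α₂ * (ζ₂ n ω : ℝ)) / W n ω)
        + c2 ω * ((if 1 ≤ ζ₁ n ω then β₂ * (ζ₂ n ω : ℝ) else 0) / W n ω)
        + c1 ω * ((if 1 ≤ ζ₂ n ω then β₂ * (ζ₁ n ω : ℝ) else 0) / W n ω) := by
    refine (condExp_congr_ae hfg).trans ?_
    have step1 : P[c1 * iR + c2 * iU + c2 * iL + c1 * iD | ℱ n] =ᵐ[P]
        P[c1 * iR | ℱ n] + P[c2 * iU | ℱ n] + P[c2 * iL | ℱ n] + P[c1 * iD | ℱ n] := by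
      refine (condExp_add ((h1int.add h2int).add h3int) h4int _).trans ?_
      exact (EventuallyEq.add ((condExp_add (h1int.add h2int) h3int _).trans
        (EventuallyEq.add (condExp_add h1int h2int _) (EventuallyEq.refl _ _)))
        (EventuallyEq.refl _ _))
    refine step1.trans ?_
    have e1 : P[c1 * iR | ℱ n] =ᵐ[P] fun ω => c1 ω * ((l₂ + α₂ * (ζ₁ n ω : ℝ)) / W n ω) :=
      (condExp_mul_of_stronglyMeasurable_left hc1m h1int hiRint).trans
        ((hright n).mono fun ω hω => by simp only [Pi.mul_apply]; exact congrArg (c1 ω * ·) hω)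
    have e2 : P[c2 * iU | ℱ n] =ᵐ[P] fun ω => c2 ω * ((l₂ + α₂ * (ζ₂ n ω : ℝ)) / W n ω) :=
      (condExp_mul_of_stronglyMeasurable_left hc2m h2int hiUint).trans
        ((hupp n).mono fun ω hω => by simp only [Pi.mul_apply]; exact congrArg (c2 ω * ·) hω)
    have e3 : P[c2 * iL | ℱ n] =ᵐ[P]
        fun ω => c2 ω * ((if 1 ≤ ζ₁ n ω then β₂ * (ζ₂ n ω : ℝ) else 0) / W n ω) :=
      (condExp_mul_of_stronglyMeasurable_left hc2m h3int hiLint).trans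
        ((hleft n).mono fun ω hω => by simp only [Pi.mul_apply]; exact congrArg (c2 ω * ·) hω)
    have e4 : P[c1 * iD | ℱ n] =ᵐ[P]
        fun ω => c1 ω * ((if 1 ≤ ζ₂ n ω then β₂ * (ζ₁ n ω : ℝ) else 0) / W n ω) :=
      (condExp_mul_of_stronglyMeasurable_left hc1m h4int hiDint).trans
        ((hdownp n).mono fun ω hω => by simp only [Pi.mul_apply]; exact congrArg (c1 ω * ·) hω)
    filter_upwards [e1, e2, e3, e4] with ω h1 h2 h3 h4
    simp only [Pi.add_apply, h1, h2, h3, h4]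
  -- conclude pointwise
  filter_upwards [key] with ω hω hx hy
  rw [hω]
  have hWω : W n ω = 2 * l₂ + (α₂ + β₂) * ((ζ₁ n ω : ℝ) + (ζ₂ n ω : ℝ)) := by
    rw [hW n ω, if_pos hx, if_pos hy]; ring
  have hxpos : (1:ℝ) ≤ (ζ₁ n ω : ℝ) := by exact_mod_cast hx
  have hypos : (1:ℝ) ≤ (ζ₂ n ω : ℝ) := by exact_mod_cast hy
  have hWpos : 0 < 2 * l₂ + (α₂ + β₂) * ((ζ₁ n ω : ℝ) + (ζ₂ n ω : ℝ)) := by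
    have h0 : 0 ≤ (α₂ + β₂) * ((ζ₁ n ω : ℝ) + (ζ₂ n ω : ℝ)) :=
      mul_nonneg (by linarith) (by positivity)
    linarith
  have hWne : 2 * l₂ + (α₂ + β₂) * ((ζ₁ n ω : ℝ) + (ζ₂ n ω : ℝ)) ≠ 0 := ne_of_gt hWpos
  rw [if_pos hx, if_pos hy, hWω]
  simp only [hc1def, hc2def]
  field_simp
  ring
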